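/- Let H and K be complex Hilbert spaces, let J : H → K be a bounded linear operator, let 𝒜 be a positive bounded linear operator on K, set T := J ∘ J*, and let λ > 0. Then J*𝒜J + λI_H and T^{1/2}𝒜T^{1/2} + λI_K are boundedly invertible and J ∘ (J*𝒜J + λI_H)^{-1} ∘ J* = T^{1/2} ∘ (T^{1/2}𝒜T^{1/2} + λI_K)^{-1} ∘ T^{1/2}. -/
import Mathlib

open ContinuousLinearMap in
lemma isUnit_isPositive_add_smul_one {E : Type*} [NormedAddCommGroup E] [InnerProductSpace ℂ E]
    [CompleteSpace E] {P : E →L[ℂ] E} (hP : P.IsPositive) {μ : ℝ} (hμ : 0 < μ) :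
    IsUnit (P + (μ : ℂ) • 1) := by
  have h0 : (0 : E →L[ℂ] E) ≤ P := (ContinuousLinearMap.nonneg_iff_isPositive P).mpr hP
  have hn : ∀ x ∈ spectrum ℝ P, 0 ≤ x := spectrum_nonneg_of_nonneg h0
  have hmem : ((-μ : ℝ) : ℂ) ∉ spectrum ℂ P := by
    rw [show ((-μ : ℝ) : ℂ) = algebraMap ℝ ℂ (-μ) from rfl, spectrum.algebraMap_mem_iff]
    intro h
    linarith [hn _ h]
  rw [spectrum.notMem_iff] at hmem
  have heq : algebraMap ℂ (E →L[ℂ] E) ((-μ : ℝ) : ℂ) - P = -(P + (μ : ℂ) • 1) := by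
    rw [Algebra.algebraMap_eq_smul_one]
    push_cast
    module
  rw [heq] at hmem
  simpa using hmem.neg

open ContinuousLinearMap in
theorem intertwining_resolvents
    {H K : Type*} [NormedAddCommGroup H] [InnerProductSpace ℂ H] [CompleteSpace H]
    [NormedAddCommGroup K] [InnerProductSpace ℂ K] [CompleteSpace K]
    (J : H →L[ℂ] K) (𝒜 : K →L[ℂ] K) (h𝒜 : 𝒜.IsPositive)
    (S : K →L[ℂ] K) (hS : S.IsPositive) (hS2 : S * S = J ∘L adjoint J)
    (μ : ℝ) (hμ : 0 < μ) :
    IsUnit (adjoint J ∘L 𝒜 ∘L J + (μ : ℂ) • 1) ∧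
    IsUnit (S * 𝒜 * S + (μ : ℂ) • 1) ∧
    ∀ B₁ : H →L[ℂ] H,
      (adjoint J ∘L 𝒜 ∘L J + (μ : ℂ) • 1) * B₁ = 1 →
      B₁ * (adjoint J ∘L 𝒜 ∘L J + (μ : ℂ) • 1) = 1 →
      ∀ B₂ : K →L[ℂ] K,
        (S * 𝒜 * S + (μ : ℂ) • 1) * B₂ = 1 →
        B₂ * (S * 𝒜 * S + (μ : ℂ) • 1) = 1 →
        J ∘L B₁ ∘L adjoint J = S * B₂ * S := by
  have hμ' : (μ : ℂ) ≠ 0 := by exact_mod_cast hμ.ne'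
  have hSadj : adjoint S = S := ContinuousLinearMap.isSelfAdjoint_iff'.mp hS.isSelfAdjoint
  have hP1 : (adjoint J ∘L 𝒜 ∘L J).IsPositive := h𝒜.adjoint_conj J
  have hP2 : (S * 𝒜 * S).IsPositive := by
    have := h𝒜.adjoint_conj S
    rw [hSadj] at this
    have hrw : S ∘L 𝒜 ∘L S = S * 𝒜 * S := by rw [mul_assoc]; rfl
    rwa [hrw] at this
  refine ⟨isUnit_isPositive_add_smul_one hP1 hμ, isUnit_isPositive_add_smul_one hP2 hμ, ?_⟩
  intro B₁ hB₁l hB₁r B₂ hB₂l hB₂r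
  set u : K →L[ℂ] K := S * 𝒜 with hu
  -- pointwise form of hS2
  have hs : ∀ z : K, S (S z) = J ((adjoint J) z) := by
    intro z
    have := congrFun (congrArg (fun f : K →L[ℂ] K => (f : K → K)) hS2) z
    simpa using this
  -- pointwise form of hB₁l
  have h1 : ∀ x : H, (adjoint J) (𝒜 (J (B₁ x))) + (μ : ℂ) • (B₁ x) = x := by
    intro x
    have := congrFun (congrArg (fun f : H →L[ℂ] H => (f : H → H)) hB₁l) x
    simpa [ContinuousLinearMap.mul_apply] using this
  -- key₁ : (S*u + μ) * (J B₁ J†) = S*S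
  have key₁ : (S * u + (μ : ℂ) • 1) * (J ∘L B₁ ∘L adjoint J) = S * S := by
    ext x
    simp only [hu, ContinuousLinearMap.mul_apply, ContinuousLinearMap.add_apply,
      ContinuousLinearMap.smul_apply, ContinuousLinearMap.one_apply,
      ContinuousLinearMap.coe_comp', Function.comp_apply]
    rw [hs, hs]
    calc J ((adjoint J) (𝒜 (J (B₁ ((adjoint J) x))))) + (μ : ℂ) • J (B₁ ((adjoint J) x))
        = J ((adjoint J) (𝒜 (J (B₁ ((adjoint J) x)))) + (μ : ℂ) • B₁ ((adjoint J) x)) := by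
          rw [map_add, map_smul]
      _ = J ((adjoint J) x) := by rw [h1]
  -- key₂ : (S*u + μ) * (S B₂ S) = S*S
  have h2 : (u * S) * B₂ = 1 - (μ : ℂ) • B₂ := by
    have : (u * S) * B₂ + (μ : ℂ) • B₂ = 1 := by
      have := hB₂l
      rw [add_mul, smul_mul_assoc, one_mul] at this
      exact this
    linear_combination (norm := noncomm_ring) this
  have key₂ : (S * u + (μ : ℂ) • 1) * (S * B₂ * S) = S * S := by
    have e1 : (S * u + (μ : ℂ) • 1) * (S * B₂ * S) =
        S * ((u * S) * B₂) * S + (μ : ℂ) • (S * B₂ * S) := by noncomm_ring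
    rw [e1, h2]
    noncomm_ring
  -- left inverse of S*u + μ
  have h3 : B₂ * (u * S) = 1 - (μ : ℂ) • B₂ := by
    have : B₂ * (u * S) + (μ : ℂ) • B₂ = 1 := by
      have := hB₂r
      rw [mul_add, mul_smul_comm, mul_one] at this
      exact this
    linear_combination (norm := noncomm_ring) this
  have key₃ : ((μ : ℂ)⁻¹ • (1 - S * B₂ * u)) * (S * u + (μ : ℂ) • 1) = 1 := by
    have h5 : S * B₂ * u * S * u = S * u - (μ : ℂ) • (S * B₂ * u) := by
      have e : S * B₂ * u * S * u = S * (B₂ * (u * S)) * u := by noncomm_ring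
      rw [e, h3, mul_sub, mul_one, mul_smul_comm, sub_mul, smul_mul_assoc]
    have expand : (1 - S * B₂ * u) * (S * u + (μ : ℂ) • 1) = (μ : ℂ) • 1 := by
      have e : (1 - S * B₂ * u) * (S * u + (μ : ℂ) • 1) =
          S * u + (μ : ℂ) • 1 - (S * B₂ * u * S * u) - (μ : ℂ) • (S * B₂ * u) := by
        noncomm_ring
        simp [smul_add, smul_smul]
      rw [e, h5]
      abel
    rw [smul_mul_assoc, expand, smul_smul, inv_mul_cancel₀ hμ', one_smul]
  -- conclude by cancellation
  set L := (μ : ℂ)⁻¹ • (1 - S * B₂ * u) with hL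
  calc J ∘L B₁ ∘L adjoint J = 1 * (J ∘L B₁ ∘L adjoint J) := (one_mul _).symm
    _ = (L * (S * u + (μ : ℂ) • 1)) * (J ∘L B₁ ∘L adjoint J) := by rw [key₃]
    _ = L * ((S * u + (μ : ℂ) • 1) * (J ∘L B₁ ∘L adjoint J)) := by rw [mul_assoc]
    _ = L * ((S * u + (μ : ℂ) • 1) * (S * B₂ * S)) := by rw [key₁, key₂]
    _ = (L * (S * u + (μ : ℂ) • 1)) * (S * B₂ * S) := (mul_assoc _ _ _).symm
    _ = S * B₂ * S := by rw [key₃, one_mul]
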